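/- Let G be a groupoid and F = {π_{V_1}, …, π_{V_n}} a finite subset of the topological full group [[G]], where each V_i is a compact open bisection with s(V_i) = r(V_i) = G⁽⁰⁾. Set K = (⋃_{1≤i,j≤n} V_iV_j) ∪ (⋃_{1≤i≤n} V_i) ∪ G⁽⁰⁾. Let u be a unit, S ⊆ G_u a finite (K, ε)-Følner set (meaning |∂_K S| ≤ ε|S|, where ∂_K⁻S = {x ∈ S : ∃y ∈ K, yx ∉ S}) with r injective on S, and P = r(S). Then |⋂_{g ∈ F ∪ F²} g⁻¹(P) ∩ P| ≥ (1-ε)|P|. -/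

import Mathlib

/-- An algebraic groupoid: a type of arrows with a (partially meaningful)
composition, inversion, source and range maps, where units are identified
with the idempotent arrows `r(x)`, `s(x)`. -/
structure Gpd (G : Type*) where
  comp : G → G → G
  inv : G → G
  src : G → G
  rng : G → G
  src_src : ∀ x, src (src x) = src x
  rng_src : ∀ x, rng (src x) = src x
  src_rng : ∀ x, src (rng x) = rng x
  rng_rng : ∀ x, rng (rng x) = rng x
  src_inv : ∀ x, src (inv x) = rng x
  rng_inv : ∀ x, rng (inv x) = src x
  inv_inv : ∀ x, inv (inv x) = x
  src_comp : ∀ x y, src x = rng y → src (comp x y) = src y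
  rng_comp : ∀ x y, src x = rng y → rng (comp x y) = rng x
  comp_assoc : ∀ x y z, src x = rng y → src y = rng z →
    comp (comp x y) z = comp x (comp y z)
  comp_inv : ∀ x, comp x (inv x) = rng x
  inv_comp : ∀ x, comp (inv x) x = src x
  id_comp : ∀ x, comp (rng x) x = x
  comp_id : ∀ x, comp x (src x) = x

namespace Gpd

variable {G : Type*} (g : Gpd G)

/-- The unit space `G⁽⁰⁾`, identified with the set of arrows fixed by the source map. -/
def unitSpace : Set G := {x | g.src x = x}

/-- The source fiber `G_u = {x : s(x) = u}`. -/
def fiber (u : G) : Set G := {x | g.src x = u}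

/-- The set product `K F = {y x : y ∈ K, x ∈ F, s(y) = r(x)}`. -/
def setComp (K F : Set G) : Set G :=
  {z | ∃ y ∈ K, ∃ x ∈ F, g.src y = g.rng x ∧ z = g.comp y x}

/-- The set inverse `K⁻¹`. -/
def setInv (K : Set G) : Set G := g.inv '' K

end Gpd

namespace Gpd

variable {G : Type*} (g : Gpd G)

/-- The preimage of a set of units `P` under the homeomorphism
`π_B = r ∘ (s|_B)⁻¹` induced by a bisection `B` with full source and range. -/
def bisPreim (B P : Set G) : Set G :=
  {v | ∃ γ ∈ B, g.src γ = v ∧ g.rng γ ∈ P}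

/-- The left `K`-boundary `∂_K S = ∂⁺_K S ∪ ∂⁻_K S`. -/
def lBoundary (K S : Set G) : Set G :=
  (g.setComp K S \ S) ∪ {x ∈ S | ∃ y ∈ K, g.src y = g.rng x ∧ g.comp y x ∉ S}

end Gpd

/-- if `S ⊆ G_u` is `(K, ε)`-Følner for
`K = (⋃ V_i V_j) ∪ (⋃ V_i) ∪ G⁽⁰⁾` with `r` injective on `S`, and `P = r(S)`,
then `|⋂_{g ∈ F ∪ F²} g⁻¹(P) ∩ P| ≥ (1-ε)|P|`. -/
theorem folner_enough
    {G : Type*} [TopologicalSpace G] (g : Gpd G)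
    (hUcompact : IsCompact g.unitSpace)
    (n : ℕ) (V : Fin n → Set G)
    (hVc : ∀ i, IsCompact (V i)) (hVo : ∀ i, IsOpen (V i))
    (hVbis : ∀ i, Set.InjOn g.src (V i) ∧ Set.InjOn g.rng (V i))
    (hVfull : ∀ i, g.src '' (V i) = g.unitSpace ∧ g.rng '' (V i) = g.unitSpace)
    (K : Set G)
    (hKdef : K = (⋃ i, ⋃ j, g.setComp (V i) (V j)) ∪ (⋃ i, V i) ∪ g.unitSpace)
    (u : G) (hu : u ∈ g.unitSpace)
    (S : Set G) (hSfin : S.Finite) (hSne : S.Nonempty) (hSu : S ⊆ g.fiber u)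
    (hSinj : Set.InjOn g.rng S)
    (ε : ℝ) (hε : 0 ≤ ε)
    (hFol : ((g.lBoundary K S).ncard : ℝ) ≤ ε * (S.ncard : ℝ))
    (P : Set G) (hP : P = g.rng '' S) :
    (1 - ε) * (P.ncard : ℝ)
      ≤ ((((⋂ i, g.bisPreim (V i) P) ∩ ⋂ i, ⋂ j, g.bisPreim (g.setComp (V i) (V j)) P)
          ∩ P).ncard : ℝ) := by
  classical
  -- fibers of K under src are finite
  have hfibK : ∀ v : G, {y ∈ K | g.src y = v}.Finite := by
    intro v
    have h1 : ∀ i j : Fin n, {y ∈ g.setComp (V i) (V j) | g.src y = v}.Subsingleton := by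
      intro i j y1 hy1 y2 hy2
      obtain ⟨⟨a1, ha1, b1, hb1, hab1, rfl⟩, hs1⟩ := hy1
      obtain ⟨⟨a2, ha2, b2, hb2, hab2, rfl⟩, hs2⟩ := hy2
      rw [g.src_comp _ _ hab1] at hs1
      rw [g.src_comp _ _ hab2] at hs2
      have hb : b1 = b2 := (hVbis j).1 hb1 hb2 (hs1.trans hs2.symm)
      subst hb
      have ha : a1 = a2 := (hVbis i).1 ha1 ha2 (hab1.trans hab2.symm)
      subst ha; rfl
    have h2 : ∀ i : Fin n, {y ∈ V i | g.src y = v}.Subsingleton := by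
      intro i y1 hy1 y2 hy2
      exact (hVbis i).1 hy1.1 hy2.1 (hy1.2.trans hy2.2.symm)
    have h3 : {y ∈ g.unitSpace | g.src y = v}.Subsingleton := by
      intro y1 hy1 y2 hy2
      have e1 : y1 = v := hy1.1 ▸ hy1.2
      have e2 : y2 = v := hy2.1 ▸ hy2.2
      rw [e1, e2]
    have hsub : {y ∈ K | g.src y = v} ⊆
        (⋃ i : Fin n, ⋃ j : Fin n, {y ∈ g.setComp (V i) (V j) | g.src y = v}) ∪
        (⋃ i : Fin n, {y ∈ V i | g.src y = v}) ∪ {y ∈ g.unitSpace | g.src y = v} := by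
      rintro y ⟨hyK, hys⟩
      rw [hKdef] at hyK
      rcases hyK with (h | h) | h
      · left; left
        simp only [Set.mem_iUnion] at h ⊢
        obtain ⟨i, j, hij⟩ := h
        exact ⟨i, j, hij, hys⟩
      · left; right
        simp only [Set.mem_iUnion] at h ⊢
        obtain ⟨i, hi⟩ := h
        exact ⟨i, hi, hys⟩
      · right; exact ⟨h, hys⟩
    refine Set.Finite.subset ?_ hsub
    refine Set.Finite.union (Set.Finite.union ?_ ?_) h3.finite
    · exact Set.finite_iUnion fun i => Set.finite_iUnion fun j => (h1 i j).finite
    · exact Set.finite_iUnion fun i => (h2 i).finite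
  -- setComp K S is finite
  have hKS : (g.setComp K S).Finite := by
    have hsub : g.setComp K S ⊆ ⋃ x ∈ S, (fun y => g.comp y x) '' {y ∈ K | g.src y = g.rng x} := by
      rintro z ⟨y, hy, x, hx, hsr, rfl⟩
      simp only [Set.mem_iUnion]
      exact ⟨x, hx, y, ⟨hy, hsr⟩, rfl⟩
    exact Set.Finite.subset (hSfin.biUnion fun x _ => (hfibK (g.rng x)).image _) hsub
  have hBfin : (g.lBoundary K S).Finite :=
    Set.Finite.union (Set.Finite.diff hKS : (g.setComp K S \ S).Finite) (hSfin.subset fun x hx => hx.1)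
  -- the good set T
  set T : Set G := {x ∈ S | ∀ y ∈ K, g.src y = g.rng x → g.comp y x ∈ S} with hT
  have hTsub : T ⊆ S := fun x hx => hx.1
  have hTfin : T.Finite := hSfin.subset hTsub
  have hdiff : S \ T ⊆ g.lBoundary K S := by
    rintro x ⟨hxS, hxT⟩
    right
    refine ⟨hxS, ?_⟩
    simp only [hT, Set.mem_setOf_eq, not_and, not_forall] at hxT
    obtain ⟨y, hy, hsr, hc⟩ := hxT hxS
    exact ⟨y, hy, hsr, hc⟩
  have hdcard : ((S \ T).ncard : ℝ) ≤ ε * S.ncard := by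
    refine le_trans ?_ hFol
    exact_mod_cast Set.ncard_le_ncard hdiff hBfin
  have hTcard : ((S.ncard : ℝ)) - ε * S.ncard ≤ (T.ncard : ℝ) := by
    have h := Set.ncard_diff_add_ncard_of_subset hTsub hSfin
    have : (S.ncard : ℝ) ≤ ((S \ T).ncard : ℝ) + (T.ncard : ℝ) := by
      exact_mod_cast le_of_eq h.symm
    linarith
  -- P has same cardinality as S
  have hPcard : P.ncard = S.ncard := by
    rw [hP]; exact Set.ncard_image_of_injOn hSinj
  have hPfin : P.Finite := hP ▸ hSfin.image _
  -- key: r '' T is contained in the target set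
  have hkey : g.rng '' T ⊆
      (((⋂ i, g.bisPreim (V i) P) ∩ ⋂ i, ⋂ j, g.bisPreim (g.setComp (V i) (V j)) P) ∩ P) := by
    rintro v ⟨x, hxT, rfl⟩
    have hxS : x ∈ S := hTsub hxT
    have hrx : g.rng x ∈ g.unitSpace := g.src_rng x
    refine ⟨⟨?_, ?_⟩, hP ▸ ⟨x, hxS, rfl⟩⟩
    · refine Set.mem_iInter.2 fun i => ?_
      have : g.rng x ∈ g.src '' (V i) := (hVfull i).1.symm ▸ hrx
      obtain ⟨γ, hγ, hsγ⟩ := this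
      have hγK : γ ∈ K := by
        rw [hKdef]; left; right
        exact Set.mem_iUnion.2 ⟨i, hγ⟩
      have hc : g.comp γ x ∈ S := hxT.2 γ hγK hsγ
      refine ⟨γ, hγ, hsγ, ?_⟩
      have : g.rng (g.comp γ x) = g.rng γ := g.rng_comp γ x hsγ
      rw [hP]
      exact ⟨g.comp γ x, hc, this⟩
    · refine Set.mem_iInter.2 fun i => Set.mem_iInter.2 fun j => ?_
      have : g.rng x ∈ g.src '' (V j) := (hVfull j).1.symm ▸ hrx
      obtain ⟨β, hβ, hsβ⟩ := this
      have hrβ : g.rng β ∈ g.unitSpace := g.src_rng β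
      have : g.rng β ∈ g.src '' (V i) := (hVfull i).1.symm ▸ hrβ
      obtain ⟨α, hα, hsα⟩ := this
      have hγ : g.comp α β ∈ g.setComp (V i) (V j) := ⟨α, hα, β, hβ, hsα, rfl⟩
      have hsγ : g.src (g.comp α β) = g.rng x := (g.src_comp α β hsα).trans hsβ
      have hγK : g.comp α β ∈ K := by
        rw [hKdef]; left; left
        exact Set.mem_iUnion.2 ⟨i, Set.mem_iUnion.2 ⟨j, hγ⟩⟩
      have hc : g.comp (g.comp α β) x ∈ S := hxT.2 _ hγK hsγ
      refine ⟨g.comp α β, hγ, hsγ, ?_⟩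
      have : g.rng (g.comp (g.comp α β) x) = g.rng (g.comp α β) := g.rng_comp _ x hsγ
      rw [hP]
      exact ⟨g.comp (g.comp α β) x, hc, this⟩
  have hrT : (g.rng '' T).ncard = T.ncard :=
    Set.ncard_image_of_injOn (hSinj.mono hTsub)
  have hfinal : (T.ncard : ℝ) ≤
      (((((⋂ i, g.bisPreim (V i) P) ∩ ⋂ i, ⋂ j, g.bisPreim (g.setComp (V i) (V j)) P)
          ∩ P).ncard : ℝ)) := by
    rw [← hrT]
    exact_mod_cast Set.ncard_le_ncard hkey (hPfin.subset fun v hv => hv.2)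
  rw [hPcard]
  nlinarith [hTcard, hfinal]
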